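/- For an odd prime p, the p-adic Gamma function satisfies Γ_p′(0)² = Γ_p″(0), i.e., the second derivative of log_p Γ_p at 0 vanishes. -/

import Mathlib

/-- `Γ_p(n) = (−1)^n ∏_{1 ≤ k < n, p ∤ k} k` on the natural numbers. -/
def gammaPNat (p n : ℕ) : ℤ :=
  (-1) ^ n * ∏ k ∈ (Finset.Ico 1 n).filter (fun k => ¬ p ∣ k), (k : ℤ)

open Finset Filter

lemma gamma_congr (p N n a k : ℕ) (hpp : p.Prime) (hp2 : 2 < p) (hk : 1 ≤ k)
    (hN : N = p ^ k) (hn' : n = p * a) (hn : n < N) :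
    (N : ℤ) ∣ gammaPNat p n * gammaPNat p (N - n) - gammaPNat p N := by
  have hpN : p ∣ N := hN ▸ dvd_pow_self p (by omega)
  have hp0 : 0 < p := hpp.pos
  have hpn : p ∣ n := hn' ▸ Dvd.intro a rfl
  have hoddp : p % 2 = 1 := Nat.odd_iff.mp (hpp.odd_of_ne_two (by omega))
  have main : ((gammaPNat p n * gammaPNat p (N - n) - gammaPNat p N : ℤ) : ZMod N) = 0 := by
    have cast_gamma : ∀ m : ℕ, ((gammaPNat p m : ℤ) : ZMod N)
        = (-1) ^ m * ∏ j ∈ (Ico 1 m).filter (fun j => ¬ p ∣ j), (j : ZMod N) := by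
      intro m; simp [gammaPNat]
    rw [Int.cast_sub, Int.cast_mul, cast_gamma, cast_gamma, cast_gamma]
    have key : ∏ j ∈ (Ico 1 (N - n)).filter (fun j => ¬ p ∣ j), (j : ZMod N)
        = ∏ m ∈ (Ico (n+1) N).filter (fun j => ¬ p ∣ j), (-(m : ZMod N)) := by
      refine Finset.prod_nbij' (fun j => N - j) (fun m => N - m) ?_ ?_ ?_ ?_ ?_
      · intro j hj
        rw [Finset.mem_filter, Finset.mem_Ico] at hj
        rw [Finset.mem_filter, Finset.mem_Ico]
        refine ⟨by omega, fun hd => hj.2 ?_⟩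
        have := Nat.dvd_sub hpN hd
        rwa [Nat.sub_sub_self (by omega)] at this
      · intro m hm
        rw [Finset.mem_filter, Finset.mem_Ico] at hm
        rw [Finset.mem_filter, Finset.mem_Ico]
        refine ⟨by omega, fun hd => hm.2 ?_⟩
        have := Nat.dvd_sub hpN hd
        rwa [Nat.sub_sub_self (by omega)] at this
      · intro j hj; rw [Finset.mem_filter, Finset.mem_Ico] at hj; omega
      · intro m hm; rw [Finset.mem_filter, Finset.mem_Ico] at hm; omega
      · intro j hj
        rw [Finset.mem_filter, Finset.mem_Ico] at hj
        have hjN : j ≤ N := by omega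
        rw [Nat.cast_sub hjN, ZMod.natCast_self, zero_sub, neg_neg]
    set t := (Ico (n+1) N).filter (fun j => ¬ p ∣ j) with ht
    have key2 : ∏ m ∈ t, (-(m : ZMod N)) = (-1) ^ t.card * ∏ m ∈ t, (m : ZMod N) := by
      rw [← Finset.prod_const (-1 : ZMod N), ← Finset.prod_mul_distrib]
      exact Finset.prod_congr rfl fun m _ => (neg_one_mul _).symm
    have hcard : Even t.card := by
      have h1 : t.card + ((Ico (n+1) N).filter (fun j => p ∣ j)).card = (Ico (n+1) N).card := by
        rw [ht, add_comm]
        exact Finset.card_filter_add_card_filter_not _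
      have hIcoIoc : Ico (n+1) N = Ioc n (N-1) := by
        ext x; simp only [Finset.mem_Ico, Finset.mem_Ioc]; omega
      have hsplit : ((Ioc 0 (N-1)).filter (fun j => p ∣ j)).card
          = ((Ioc 0 n).filter (fun j => p ∣ j)).card
            + ((Ioc n (N-1)).filter (fun j => p ∣ j)).card := by
        have hu : Ioc 0 (N-1) = Ioc 0 n ∪ Ioc n (N-1) := by
          ext x; simp only [Finset.mem_union, Finset.mem_Ioc]; omega
        rw [hu, Finset.filter_union, Finset.card_union_of_disjoint]
        refine Finset.disjoint_left.mpr ?_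
        intro x hx hx'
        rw [Finset.mem_filter, Finset.mem_Ioc] at hx hx'
        omega
      rw [Nat.Ioc_filter_dvd_card_eq_div, Nat.Ioc_filter_dvd_card_eq_div, ← hIcoIoc] at hsplit
      have hNQ : N = p ^ (k - 1) * p := by
        rw [hN, ← pow_succ]
        congr 1; omega
      have hQ1 : 1 ≤ p ^ (k - 1) := Nat.one_le_pow _ _ hp0
      have hdiv1 : (N - 1) / p = p ^ (k - 1) - 1 := by
        have e' : (p ^ (k - 1) - 1) * p = p ^ (k - 1) * p - p := by rw [tsub_mul, one_mul]
        refine Nat.div_eq_of_lt_le ?_ ?_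
        · rw [e', ← hNQ]; omega
        · rw [Nat.sub_add_cancel hQ1, ← hNQ]; omega
      have hdiv2 : n / p = a := by rw [hn', Nat.mul_div_cancel_left _ hp0]
      rw [hdiv1, hdiv2] at hsplit
      have hoddN : N % 2 = 1 := by
        rw [hN]; exact Nat.odd_iff.mp ((Nat.odd_iff.mpr hoddp).pow)
      have hoddQ : p ^ (k - 1) % 2 = 1 := Nat.odd_iff.mp ((Nat.odd_iff.mpr hoddp).pow)
      have hna : n % 2 = a % 2 := by
        rcases Nat.even_or_odd a with h | h
        · have h2 : Even n := hn' ▸ h.mul_left p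
          have h3 := Nat.even_iff.mp h2
          have h' := Nat.even_iff.mp h
          omega
        · have h2 : Odd n := hn' ▸ (Nat.odd_iff.mpr hoddp).mul h
          have h3 := Nat.odd_iff.mp h2
          have h' := Nat.odd_iff.mp h
          omega
      have hcardIco : (Ico (n+1) N).card = N - n - 1 := by
        rw [Nat.card_Ico]; omega
      rw [Nat.even_iff]
      omega
    have hunion : ((Ico 1 n).filter (fun j => ¬ p ∣ j)) ∪ t
        = (Ico 1 N).filter (fun j => ¬ p ∣ j) := by
      rw [ht, ← Finset.filter_union]
      ext x
      simp only [Finset.mem_union, Finset.mem_filter, Finset.mem_Ico]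
      constructor
      · rintro ⟨h | h, hd⟩ <;> exact ⟨by omega, hd⟩
      · rintro ⟨h, hd⟩
        have hxn : x ≠ n := by rintro rfl; exact hd hpn
        exact ⟨by omega, hd⟩
    have hdisj : Disjoint ((Ico 1 n).filter (fun j => ¬ p ∣ j)) t := by
      rw [ht]
      refine Finset.disjoint_left.mpr ?_
      intro x hx hx'
      rw [Finset.mem_filter, Finset.mem_Ico] at hx hx'
      omega
    have hprodu : (∏ j ∈ (Ico 1 n).filter (fun j => ¬ p ∣ j), (j : ZMod N)) * ∏ m ∈ t, (m : ZMod N)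
        = ∏ j ∈ (Ico 1 N).filter (fun j => ¬ p ∣ j), (j : ZMod N) := by
      rw [← Finset.prod_union hdisj, hunion]
    have hsigns : ((-1 : ZMod N) ^ n) * ((-1 : ZMod N) ^ (N - n)) = (-1) ^ N := by
      rw [← pow_add]
      congr 1; omega
    rw [key, key2, hcard.neg_one_pow, sub_eq_zero, ← hsigns, ← hprodu]
    ring
  exact_mod_cast (ZMod.intCast_zmod_eq_zero_iff_dvd _ N).mp main



/-- `Γ_p′(0)² = Γ_p″(0)`, i.e. `(log_p Γ_p)″(0) = 0`.
`Γ` is the Morita `p`-adic Gamma function, characterized as interpolating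
`gammaPNat p` on `ℕ`, with first and second derivatives `Γ'`, `Γ''` on the
unit ball of `ℚ_p`. -/
theorem padic_gamma_deriv_zero_sq (p : ℕ) [Fact p.Prime] (hp : 2 < p)
    (Γ Γ' Γ'' : ℚ_[p] → ℚ_[p])
    (hΓnat : ∀ k : ℕ, Γ (k : ℚ_[p]) = (gammaPNat p k : ℚ_[p]))
    (hΓderiv : ∀ y ∈ {y : ℚ_[p] | ‖y‖ ≤ 1},
      HasDerivWithinAt Γ (Γ' y) {y : ℚ_[p] | ‖y‖ ≤ 1} y)
    (hΓderiv2 : ∀ y ∈ {y : ℚ_[p] | ‖y‖ ≤ 1},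
      HasDerivWithinAt Γ' (Γ'' y) {y : ℚ_[p] | ‖y‖ ≤ 1} y) :
    Γ' 0 ^ 2 = Γ'' 0 := by
  have hpp : p.Prime := Fact.out
  have hp1R : (1:ℝ) < p := by exact_mod_cast hpp.one_lt
  -- the unit ball is open
  have hSopen : IsOpen {y : ℚ_[p] | ‖y‖ ≤ 1} := by
    rw [Metric.isOpen_iff]
    intro y hy
    refine ⟨1, one_pos, fun z hz => ?_⟩
    rw [Metric.mem_ball, dist_eq_norm] at hz
    simp only [Set.mem_setOf_eq] at hy ⊢
    calc ‖z‖ = ‖(z - y) + y‖ := by ring_nf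
      _ ≤ max ‖z - y‖ ‖y‖ := Padic.nonarchimedean _ _
      _ ≤ 1 := max_le hz.le hy
  have hd1 : ∀ y : ℚ_[p], ‖y‖ ≤ 1 → HasDerivAt Γ (Γ' y) y :=
    fun y hy => (hΓderiv y hy).hasDerivAt (hSopen.mem_nhds hy)
  have hd2 : ∀ y : ℚ_[p], ‖y‖ ≤ 1 → HasDerivAt Γ' (Γ'' y) y :=
    fun y hy => (hΓderiv2 y hy).hasDerivAt (hSopen.mem_nhds hy)
  have hc : ∀ y : ℚ_[p], ‖y‖ ≤ 1 → ContinuousAt Γ y := fun y hy => (hd1 y hy).continuousAt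
  have hΓ0 : Γ 0 = 1 := by
    have := hΓnat 0
    simpa [gammaPNat] using this
  have hnat_norm : ∀ n : ℕ, ‖((n:ℕ) : ℚ_[p])‖ ≤ 1 := by
    intro n
    have := Padic.norm_int_le_one (p := p) (n : ℤ)
    simpa using this
  -- Step A: Γ(n) Γ(-n) = 1 for p ∣ n
  have stepA : ∀ n : ℕ, p ∣ n → Γ ((n:ℕ) : ℚ_[p]) * Γ (-((n:ℕ) : ℚ_[p])) = 1 := by
    intro n hdvd
    obtain ⟨a, rfl⟩ := hdvd
    have hnormp : ‖(p : ℚ_[p])‖ < 1 := by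
      rw [Padic.norm_p]
      rw [inv_lt_one_iff₀]; right; exact hp1R
    have hpk : Tendsto (fun k : ℕ => (p:ℚ_[p])^k) atTop (nhds 0) :=
      tendsto_pow_atTop_nhds_zero_of_norm_lt_one hnormp
    have hlarge : ∀ᶠ k : ℕ in atTop, p * a < p ^ k ∧ 1 ≤ k := by
      filter_upwards [eventually_ge_atTop (p*a), eventually_ge_atTop 1] with k h1 h2
      exact ⟨lt_of_le_of_lt h1 (Nat.lt_pow_self (n := k) hpp.one_lt), h2⟩
    -- Γ(p^k) → 1
    have t1 : Tendsto (fun k : ℕ => Γ (((p ^ k : ℕ)) : ℚ_[p])) atTop (nhds 1) := by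
      have h0 : Tendsto (fun k : ℕ => ((p ^ k : ℕ) : ℚ_[p])) atTop (nhds 0) := by
        have : (fun k : ℕ => ((p ^ k : ℕ) : ℚ_[p])) = fun k : ℕ => (p:ℚ_[p])^k := by
          funext k; push_cast; ring
        rw [this]; exact hpk
      have := ((hc 0 (by simp)).tendsto).comp h0
      rwa [hΓ0] at this
    -- Γ(p^k - n) → Γ(-n)
    have t2 : Tendsto (fun k : ℕ => ((p ^ k - p * a : ℕ) : ℚ_[p])) atTop
        (nhds (-((p * a : ℕ) : ℚ_[p]))) := by
      have heq : ∀ᶠ k : ℕ in atTop, (p:ℚ_[p])^k - ((p * a : ℕ) : ℚ_[p])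
          = ((p ^ k - p * a : ℕ) : ℚ_[p]) := by
        filter_upwards [hlarge] with k hk
        rw [Nat.cast_sub hk.1.le]
        push_cast; ring
      have : Tendsto (fun k : ℕ => (p:ℚ_[p])^k - ((p * a : ℕ) : ℚ_[p])) atTop
          (nhds (0 - ((p * a : ℕ) : ℚ_[p]))) := hpk.sub_const _
      rw [zero_sub] at this
      exact this.congr' heq
    have t3 : Tendsto (fun k : ℕ => Γ (((p ^ k - p * a : ℕ)) : ℚ_[p])) atTop
        (nhds (Γ (-((p * a : ℕ) : ℚ_[p])))) := by
      have hnm : ‖-((p * a : ℕ) : ℚ_[p])‖ ≤ 1 := by rw [norm_neg]; exact hnat_norm _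
      exact ((hc _ hnm).tendsto).comp t2
    -- the congruence
    have t4 : Tendsto (fun k : ℕ => Γ (((p * a : ℕ)) : ℚ_[p]) * Γ (((p ^ k - p * a : ℕ)) : ℚ_[p])
        - Γ (((p ^ k : ℕ)) : ℚ_[p])) atTop (nhds 0) := by
      apply squeeze_zero_norm' (a := fun k : ℕ => ((p:ℝ))⁻¹ ^ k)
      · filter_upwards [hlarge] with k hk
        have hdvd := gamma_congr p (p ^ k) (p * a) a k hpp hp hk.2 rfl rfl hk.1
        have : Γ (((p * a : ℕ)) : ℚ_[p]) * Γ (((p ^ k - p * a : ℕ)) : ℚ_[p])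
            - Γ (((p ^ k : ℕ)) : ℚ_[p])
            = (((gammaPNat p (p*a) * gammaPNat p (p^k - p*a) - gammaPNat p (p^k) : ℤ)) : ℚ_[p]) := by
          rw [hΓnat, hΓnat, hΓnat]; push_cast; ring
        rw [this]
        have hb := (Padic.norm_int_le_pow_iff_dvd
          (gammaPNat p (p*a) * gammaPNat p (p^k - p*a) - gammaPNat p (p^k)) k).mpr (by exact_mod_cast hdvd)
        calc ‖(((gammaPNat p (p*a) * gammaPNat p (p^k - p*a) - gammaPNat p (p^k) : ℤ)) : ℚ_[p])‖
            ≤ (p:ℝ) ^ (-(k:ℤ)) := hb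
          _ = ((p:ℝ))⁻¹ ^ k := by
              rw [zpow_neg, inv_pow, zpow_natCast]
      · exact tendsto_pow_atTop_nhds_zero_of_lt_one (by positivity) (by
          rw [inv_lt_one_iff₀]; right; exact hp1R)
    -- combine
    have t5 : Tendsto (fun k : ℕ => Γ (((p * a : ℕ)) : ℚ_[p]) * Γ (((p ^ k - p * a : ℕ)) : ℚ_[p]))
        atTop (nhds (Γ (((p * a : ℕ)) : ℚ_[p]) * Γ (-((p * a : ℕ) : ℚ_[p])))) :=
      tendsto_const_nhds.mul t3
    have t6 : Tendsto (fun k : ℕ => Γ (((p * a : ℕ)) : ℚ_[p]) * Γ (((p ^ k - p * a : ℕ)) : ℚ_[p]))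
        atTop (nhds 1) := by
      have := t4.add t1
      rw [zero_add] at this
      refine this.congr (fun k => ?_)
      ring
    exact tendsto_nhds_unique t5 t6
  -- Step B: Γ(x) Γ(-x) = 1 on the open ball
  have stepB : ∀ x : ℚ_[p], ‖x‖ < 1 → Γ x * Γ (-x) = 1 := by
    intro x hx
    set z : ℤ_[p] := ⟨x, hx.le⟩ with hz
    have happr : ∀ j : ℕ, ‖x - ((z.appr j : ℕ) : ℚ_[p])‖ ≤ (p:ℝ)⁻¹ ^ j := by
      intro j
      have hmem := PadicInt.appr_spec j z
      have := (PadicInt.norm_le_pow_iff_mem_span_pow (z - ((z.appr j : ℕ) : ℤ_[p])) j).mpr hmem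
      have hcoe : ‖z - ((z.appr j : ℕ) : ℤ_[p])‖ = ‖x - ((z.appr j : ℕ) : ℚ_[p])‖ := by
        rw [← PadicInt.padic_norm_e_of_padicInt, PadicInt.coe_sub]
        norm_cast
      rw [hcoe] at this
      calc ‖x - ((z.appr j : ℕ) : ℚ_[p])‖ ≤ (p:ℝ) ^ (-(j:ℤ)) := this
        _ = (p:ℝ)⁻¹ ^ j := by rw [zpow_neg, inv_pow, zpow_natCast]
    have htend : Tendsto (fun j : ℕ => ((z.appr j : ℕ) : ℚ_[p])) atTop (nhds x) := by
      have h0 : Tendsto (fun j : ℕ => ((z.appr j : ℕ) : ℚ_[p]) - x) atTop (nhds 0) := by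
        apply squeeze_zero_norm' (a := fun j : ℕ => ((p:ℝ))⁻¹ ^ j)
        · filter_upwards with j
          rw [norm_sub_rev]
          exact happr j
        · exact tendsto_pow_atTop_nhds_zero_of_lt_one (by positivity) (by
            rw [inv_lt_one_iff₀]; right; exact hp1R)
      have := h0.add_const x
      simpa using this
    have hdvdappr : ∀ᶠ j : ℕ in atTop, p ∣ z.appr j := by
      filter_upwards [eventually_ge_atTop 1] with j hj
      have h1 : ‖((z.appr j : ℕ) : ℚ_[p])‖ < 1 := by
        have : ((z.appr j : ℕ) : ℚ_[p]) = x - (x - ((z.appr j : ℕ) : ℚ_[p])) := by ring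
        rw [this]
        have hsub : ‖x - ((z.appr j : ℕ) : ℚ_[p])‖ < 1 := by
          calc ‖x - ((z.appr j : ℕ) : ℚ_[p])‖ ≤ (p:ℝ)⁻¹ ^ j := happr j
            _ ≤ (p:ℝ)⁻¹ ^ 1 := by
                apply pow_le_pow_of_le_one (by positivity) (by
                  rw [inv_le_one_iff₀]; right; exact hp1R.le) hj
            _ < 1 := by rw [pow_one, inv_lt_one_iff₀]; right; exact hp1R
        calc ‖x - (x - ((z.appr j : ℕ) : ℚ_[p]))‖ ≤ max ‖x‖ ‖-(x - ((z.appr j : ℕ) : ℚ_[p]))‖ := by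
              have := Padic.nonarchimedean x (-(x - ((z.appr j : ℕ) : ℚ_[p])))
              simpa [sub_eq_add_neg] using this
          _ < 1 := max_lt hx (by rwa [norm_neg])
      have h2 : (p:ℤ) ∣ ((z.appr j : ℕ) : ℤ) := by
        rw [← Padic.norm_intCast_lt_one_iff]
        exact_mod_cast h1
      exact_mod_cast h2
    have hgx : Tendsto (fun j : ℕ => Γ ((z.appr j : ℕ) : ℚ_[p]) * Γ (-((z.appr j : ℕ) : ℚ_[p])))
        atTop (nhds (Γ x * Γ (-x))) := by
      have hΓx := ((hc x hx.le).tendsto).comp htend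
      have hΓnx := ((hc (-x) (by rw [norm_neg]; exact hx.le)).tendsto).comp htend.neg
      exact hΓx.mul hΓnx
    have hgx1 : Tendsto (fun j : ℕ => Γ ((z.appr j : ℕ) : ℚ_[p]) * Γ (-((z.appr j : ℕ) : ℚ_[p])))
        atTop (nhds 1) := by
      refine Tendsto.congr' ?_ tendsto_const_nhds
      filter_upwards [hdvdappr] with j hj
      exact (stepA (z.appr j) hj).symm
    exact tendsto_nhds_unique hgx hgx1
  -- Step C
  have hTopen : IsOpen {y : ℚ_[p] | ‖y‖ < 1} := by
    rw [Metric.isOpen_iff]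
    intro y hy
    refine ⟨1, one_pos, fun w hw => ?_⟩
    rw [Metric.mem_ball, dist_eq_norm] at hw
    simp only [Set.mem_setOf_eq] at hy ⊢
    calc ‖w‖ = ‖(w - y) + y‖ := by ring_nf
      _ ≤ max ‖w - y‖ ‖y‖ := Padic.nonarchimedean _ _
      _ < 1 := max_lt hw hy
  have hD : ∀ x : ℚ_[p], ‖x‖ ≤ 1 →
      HasDerivAt (fun y => Γ y * Γ (-y)) (Γ' x * Γ (-x) - Γ x * Γ' (-x)) x := by
    intro x hx
    have hnx : ‖-x‖ ≤ 1 := by rwa [norm_neg]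
    have h2 : HasDerivAt (fun y : ℚ_[p] => Γ (-y)) (-Γ' (-x)) x := by
      have := (hd1 (-x) hnx).comp x (hasDerivAt_neg x)
      simpa [Function.comp_def, mul_comm] using this
    have := (hd1 x hx).mul h2
    rw [show Γ' x * Γ (-x) - Γ x * Γ' (-x) = Γ' x * Γ (-x) + Γ x * (-Γ' (-x)) by ring]
    exact this
  have hDzero : ∀ x : ℚ_[p], ‖x‖ < 1 → Γ' x * Γ (-x) - Γ x * Γ' (-x) = 0 := by
    intro x hx
    have hEq : (fun y => Γ y * Γ (-y)) =ᶠ[nhds x] (fun _ => (1:ℚ_[p])) := by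
      filter_upwards [hTopen.mem_nhds hx] with w hw
      exact stepB w hw
    have hconst : HasDerivAt (fun y : ℚ_[p] => Γ y * Γ (-y)) 0 x :=
      (hasDerivAt_const x (1:ℚ_[p])).congr_of_eventuallyEq hEq
    exact (hD x hx.le).unique hconst
  -- second derivative of D at 0
  have hDD : HasDerivAt (fun x : ℚ_[p] => Γ' x * Γ (-x) - Γ x * Γ' (-x))
      ((Γ'' 0 * Γ 0 + Γ' 0 * (-Γ' 0)) - (Γ' 0 * Γ' 0 + Γ 0 * (-Γ'' 0))) 0 := by
    have h01 : ‖(0:ℚ_[p])‖ ≤ 1 := by simp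
    have hnΓ : HasDerivAt (fun y : ℚ_[p] => Γ (-y)) (-Γ' 0) 0 := by
      have := (hd1 (-0) (by simpa using h01)).comp 0 (hasDerivAt_neg 0)
      simpa [Function.comp_def, mul_comm] using this
    have hnΓ' : HasDerivAt (fun y : ℚ_[p] => Γ' (-y)) (-Γ'' 0) 0 := by
      have := (hd2 (-0) (by simpa using h01)).comp 0 (hasDerivAt_neg 0)
      simpa [Function.comp_def, mul_comm] using this
    have hA : HasDerivAt (fun y : ℚ_[p] => Γ' y * Γ (-y)) (Γ'' 0 * Γ (-0) + Γ' 0 * (-Γ' 0)) 0 :=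
      (hd2 0 h01).mul hnΓ
    have hB : HasDerivAt (fun y : ℚ_[p] => Γ y * Γ' (-y)) (Γ' 0 * Γ' (-0) + Γ 0 * (-Γ'' 0)) 0 :=
      (hd1 0 h01).mul hnΓ'
    have := hA.sub hB
    simp only [neg_zero] at this
    exact this
  have hEq0 : (fun x : ℚ_[p] => Γ' x * Γ (-x) - Γ x * Γ' (-x)) =ᶠ[nhds 0] (fun _ => (0:ℚ_[p])) := by
    filter_upwards [hTopen.mem_nhds (by simp : (0:ℚ_[p]) ∈ {y : ℚ_[p] | ‖y‖ < 1})] with w hw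
    exact hDzero w hw
  have hfinal : (Γ'' 0 * Γ 0 + Γ' 0 * (-Γ' 0)) - (Γ' 0 * Γ' 0 + Γ 0 * (-Γ'' 0)) = 0 := by
    have hconst : HasDerivAt (fun x : ℚ_[p] => Γ' x * Γ (-x) - Γ x * Γ' (-x)) 0 0 :=
      (hasDerivAt_const 0 (0:ℚ_[p])).congr_of_eventuallyEq hEq0
    exact hDD.unique hconst
  rw [hΓ0] at hfinal
  have h2ne : (2:ℚ_[p]) ≠ 0 := two_ne_zero
  linear_combination -hfinal / 2
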